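/- Closed form of the Cauchy–Schwarz-type divergence between two labeled multi-Bernoullis (discrete attribute space, unit U = 1): with f_i = r_i p_i/(1−r_i) as in the LMB setup, −ln( ⟨π₁,π₂⟩ / (√⟨π₁,π₁⟩·√⟨π₂,π₂⟩) ) = −Σ_{ℓ∈𝕃} ln[ (1 + Σ_x f₁(x,ℓ)f₂(x,ℓ)) / (√(1 + Σ_x f₁(x,ℓ)²)·√(1 + Σ_x f₂(x,ℓ)²)) ], where ⟨π_i,π_j⟩ = Σ_{L⊆𝕃} Σ over attribute assignments of π_i·π_j. -/

import Mathlib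

lemma sum_over_subsets {𝕃 X : Type*} [Fintype 𝕃] [DecidableEq 𝕃] [Fintype X]
    (g : X → 𝕃 → ℝ) :
    ∑ L : Finset 𝕃, ∑ x : {a // a ∈ L} → X, ∏ ℓ ∈ L.attach, g (x ℓ) ℓ.1
      = ∏ ℓ : 𝕃, (1 + ∑ x : X, g x ℓ) := by
  have : (∏ ℓ : 𝕃, (1 + ∑ x : X, g x ℓ))
      = ∏ ℓ ∈ Finset.univ, ((∑ x : X, g x ℓ) + 1) := by
    simp [add_comm]
  rw [this, Finset.prod_add]
  simp only [Finset.prod_const_one, mul_one, Finset.powerset_univ]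
  refine Finset.sum_congr rfl fun L _ => ?_
  rw [← Finset.prod_attach L (fun ℓ => ∑ x : X, g x ℓ)]
  rw [← Finset.univ_eq_attach, Finset.prod_univ_sum]
  simp [Finset.univ_eq_attach]

lemma sqrt_finprod {𝕃 : Type*} [Fintype 𝕃] (h : 𝕃 → ℝ) (hh : ∀ ℓ, 0 ≤ h ℓ) :
    Real.sqrt (∏ ℓ : 𝕃, h ℓ) = ∏ ℓ : 𝕃, Real.sqrt (h ℓ) := by
  rw [← Real.sqrt_sq (Finset.prod_nonneg fun ℓ _ => Real.sqrt_nonneg _), ← Finset.prod_pow]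
  congr 1
  exact Finset.prod_congr rfl fun ℓ _ => (Real.sq_sqrt (hh ℓ)).symm

/-- Closed form of the Cauchy–Schwarz divergence between two labeled multi-Bernoullis
(discrete attribute space, unit U = 1). -/
theorem lmb_cauchySchwarz_divergence_closed_form
    {𝕃 X : Type*} [Fintype 𝕃] [DecidableEq 𝕃] [Fintype X]
    (r₁ r₂ : 𝕃 → ℝ) (p₁ p₂ : X → 𝕃 → ℝ)
    (hr₁0 : ∀ ℓ, 0 ≤ r₁ ℓ) (hr₁1 : ∀ ℓ, r₁ ℓ < 1)
    (hr₂0 : ∀ ℓ, 0 ≤ r₂ ℓ) (hr₂1 : ∀ ℓ, r₂ ℓ < 1)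
    (hp₁0 : ∀ x ℓ, 0 ≤ p₁ x ℓ) (hp₁1 : ∀ ℓ, ∑ x : X, p₁ x ℓ = 1)
    (hp₂0 : ∀ x ℓ, 0 ≤ p₂ x ℓ) (hp₂1 : ∀ ℓ, ∑ x : X, p₂ x ℓ = 1)
    (f₁ f₂ : X → 𝕃 → ℝ)
    (hf₁ : ∀ x ℓ, f₁ x ℓ = r₁ ℓ * p₁ x ℓ / (1 - r₁ ℓ))
    (hf₂ : ∀ x ℓ, f₂ x ℓ = r₂ ℓ * p₂ x ℓ / (1 - r₂ ℓ))
    (π₁ π₂ : (L : Finset 𝕃) → ({a // a ∈ L} → X) → ℝ)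
    (hπ₁ : ∀ L x, π₁ L x = (∏ ℓ : 𝕃, (1 - r₁ ℓ)) * ∏ ℓ ∈ L.attach, f₁ (x ℓ) ℓ.1)
    (hπ₂ : ∀ L x, π₂ L x = (∏ ℓ : 𝕃, (1 - r₂ ℓ)) * ∏ ℓ ∈ L.attach, f₂ (x ℓ) ℓ.1) :
    -Real.log
        ((∑ L : Finset 𝕃, ∑ x : {a // a ∈ L} → X, π₁ L x * π₂ L x) /
          (Real.sqrt (∑ L : Finset 𝕃, ∑ x : {a // a ∈ L} → X, π₁ L x * π₁ L x) *
            Real.sqrt (∑ L : Finset 𝕃, ∑ x : {a // a ∈ L} → X, π₂ L x * π₂ L x)))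
      = -∑ ℓ : 𝕃,
          Real.log
            ((1 + ∑ x : X, f₁ x ℓ * f₂ x ℓ) /
              (Real.sqrt (1 + ∑ x : X, f₁ x ℓ ^ 2) *
                Real.sqrt (1 + ∑ x : X, f₂ x ℓ ^ 2))) := by
  set C₁ := ∏ ℓ : 𝕃, (1 - r₁ ℓ) with hC₁
  set C₂ := ∏ ℓ : 𝕃, (1 - r₂ ℓ) with hC₂
  have hC₁pos : 0 < C₁ := Finset.prod_pos fun ℓ _ => by linarith [hr₁1 ℓ]
  have hC₂pos : 0 < C₂ := Finset.prod_pos fun ℓ _ => by linarith [hr₂1 ℓ]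
  have hf₁0 : ∀ x ℓ, 0 ≤ f₁ x ℓ := fun x ℓ => by
    rw [hf₁]
    exact div_nonneg (mul_nonneg (hr₁0 ℓ) (hp₁0 x ℓ)) (by linarith [hr₁1 ℓ])
  have hf₂0 : ∀ x ℓ, 0 ≤ f₂ x ℓ := fun x ℓ => by
    rw [hf₂]
    exact div_nonneg (mul_nonneg (hr₂0 ℓ) (hp₂0 x ℓ)) (by linarith [hr₂1 ℓ])
  set A : 𝕃 → ℝ := fun ℓ => 1 + ∑ x : X, f₁ x ℓ * f₂ x ℓ with hA
  set B : 𝕃 → ℝ := fun ℓ => 1 + ∑ x : X, f₁ x ℓ ^ 2 with hB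
  set D : 𝕃 → ℝ := fun ℓ => 1 + ∑ x : X, f₂ x ℓ ^ 2 with hD
  have hA1 : ∀ ℓ, (1:ℝ) ≤ A ℓ := fun ℓ => le_add_of_nonneg_right
    (Finset.sum_nonneg fun x _ => mul_nonneg (hf₁0 x ℓ) (hf₂0 x ℓ))
  have hB1 : ∀ ℓ, (1:ℝ) ≤ B ℓ := fun ℓ => le_add_of_nonneg_right
    (Finset.sum_nonneg fun x _ => sq_nonneg _)
  have hD1 : ∀ ℓ, (1:ℝ) ≤ D ℓ := fun ℓ => le_add_of_nonneg_right
    (Finset.sum_nonneg fun x _ => sq_nonneg _)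
  -- closed forms of the three inner products
  have key : ∀ (g h : X → 𝕃 → ℝ) (c₁ c₂ : ℝ)
      (π ρ : (L : Finset 𝕃) → ({a // a ∈ L} → X) → ℝ),
      (∀ L x, π L x = c₁ * ∏ ℓ ∈ L.attach, g (x ℓ) ℓ.1) →
      (∀ L x, ρ L x = c₂ * ∏ ℓ ∈ L.attach, h (x ℓ) ℓ.1) →
      (∑ L : Finset 𝕃, ∑ x : {a // a ∈ L} → X, π L x * ρ L x)
        = c₁ * c₂ * ∏ ℓ : 𝕃, (1 + ∑ x : X, g x ℓ * h x ℓ) := by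
    intro g h c₁ c₂ π ρ hπ hρ
    rw [← sum_over_subsets (fun x ℓ => g x ℓ * h x ℓ)]
    rw [Finset.mul_sum]
    refine Finset.sum_congr rfl fun L _ => ?_
    rw [Finset.mul_sum]
    refine Finset.sum_congr rfl fun x _ => ?_
    rw [hπ, hρ, Finset.prod_mul_distrib]
    ring
  have h12 := key f₁ f₂ C₁ C₂ π₁ π₂ hπ₁ hπ₂
  have h11 := key f₁ f₁ C₁ C₁ π₁ π₁ hπ₁ hπ₁
  have h22 := key f₂ f₂ C₂ C₂ π₂ π₂ hπ₂ hπ₂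
  have hsq : ∀ x ℓ, f₁ x ℓ * f₁ x ℓ = f₁ x ℓ ^ 2 := fun x ℓ => (sq (f₁ x ℓ)).symm
  rw [h12, h11, h22]
  have e11 : (∏ ℓ : 𝕃, (1 + ∑ x : X, f₁ x ℓ * f₁ x ℓ)) = ∏ ℓ : 𝕃, B ℓ := by
    refine Finset.prod_congr rfl fun ℓ _ => ?_
    simp [hB, sq]
  have e22 : (∏ ℓ : 𝕃, (1 + ∑ x : X, f₂ x ℓ * f₂ x ℓ)) = ∏ ℓ : 𝕃, D ℓ := by
    refine Finset.prod_congr rfl fun ℓ _ => ?_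
    simp [hD, sq]
  rw [e11, e22]
  have hBnn : ∀ ℓ, (0:ℝ) ≤ B ℓ := fun ℓ => le_trans zero_le_one (hB1 ℓ)
  have hDnn : ∀ ℓ, (0:ℝ) ≤ D ℓ := fun ℓ => le_trans zero_le_one (hD1 ℓ)
  have s11 : Real.sqrt (C₁ * C₁ * ∏ ℓ : 𝕃, B ℓ)
      = C₁ * ∏ ℓ : 𝕃, Real.sqrt (B ℓ) := by
    rw [Real.sqrt_mul (mul_self_nonneg C₁), Real.sqrt_mul_self hC₁pos.le,
      sqrt_finprod B hBnn]
  have s22 : Real.sqrt (C₂ * C₂ * ∏ ℓ : 𝕃, D ℓ)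
      = C₂ * ∏ ℓ : 𝕃, Real.sqrt (D ℓ) := by
    rw [Real.sqrt_mul (mul_self_nonneg C₂), Real.sqrt_mul_self hC₂pos.le,
      sqrt_finprod D hDnn]
  rw [s11, s22]
  have hratio :
      C₁ * C₂ * (∏ ℓ : 𝕃, A ℓ) /
        (C₁ * (∏ ℓ : 𝕃, Real.sqrt (B ℓ)) * (C₂ * ∏ ℓ : 𝕃, Real.sqrt (D ℓ)))
      = ∏ ℓ : 𝕃, (A ℓ / (Real.sqrt (B ℓ) * Real.sqrt (D ℓ))) := by
    rw [Finset.prod_div_distrib, Finset.prod_mul_distrib]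
    field_simp
  rw [hratio, Real.log_prod]
  · intro ℓ _
    have hApos : 0 < A ℓ := lt_of_lt_of_le one_pos (hA1 ℓ)
    have hBpos : 0 < Real.sqrt (B ℓ) := Real.sqrt_pos.mpr (lt_of_lt_of_le one_pos (hB1 ℓ))
    have hDpos : 0 < Real.sqrt (D ℓ) := Real.sqrt_pos.mpr (lt_of_lt_of_le one_pos (hD1 ℓ))
    positivity
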